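/- Let k'' be a power of 2 with k'' > 4 and let r ≥ 2. With F as in the recursive definition (F(k')=1 for k'≤4; F(k')=2^16 r^3 log r · F(k'/2) for powers of two k'>4; F(k')=F(next power of two) otherwise), suppose a set S' with |out(S')| = k' ≤ ⌈k/2⌉ and |S'| > 128·F(k') is partitioned into clusters {Z} with Σ over clusters of size-class i (those with k''/2^i < |out(Z)| ≤ k''/2^{i-1}) having at most 2^{3i+3} members, where k'' is the smallest power of 2 ≥ k'. If each cluster Z is replaced by a set of at most F(|out(Z)|) vertices, the total number of resulting vertices Σ_Z F(|out(Z)|) is strictly less than |S'|. -/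

import Mathlib

namespace VS

/-- The recursive specification of the function `F` (for the parameter `r`):
`F(k') = 1` for `k' ≤ 4`; `F(k') = 2^16·r^3·log r·F(k'/2)` when `k' > 4` is a power of
two; and `F(k') = F(k'')` for the smallest power of two `k'' ≥ k'` otherwise. -/
def FSpec (r : ℕ) (F : ℕ → ℝ) : Prop :=
  (∀ k ≤ 4, F k = 1) ∧
  (∀ m : ℕ, 4 < 2 ^ m → F (2 ^ m) = 2 ^ 16 * (r : ℝ) ^ 3 * Real.logb 2 r * F (2 ^ m / 2)) ∧
  (∀ k : ℕ, 4 < k → (∀ m : ℕ, k ≠ 2 ^ m) → F k = F (2 ^ Nat.clog 2 k))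

/-- Let `k'' = 2^m > 4` be the smallest power of two with `k' ≤ k''`,
where `k' ≤ ⌈k/2⌉`, and let a set `S'` with `|out(S')| = k'` and `|S'| > 128·F(k')` be
partitioned into clusters indexed by `ι`, where the number of clusters of size-class `i`
(those with `k''/2^i < |out(Z)| ≤ k''/2^{i-1}`) is at most `2^{3i+3}`. If each cluster
`Z` is replaced by at most `F(|out(Z)|)` vertices, then the total number of resulting
vertices is strictly less than `|S'|`. -/
theorem stmt15 (r : ℕ) (hr : 2 ≤ r) (F : ℕ → ℝ) (hF : FSpec r F)
    (k k' m : ℕ) (hk' : k' ≤ (k + 1) / 2)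
    (hpow : 4 < 2 ^ m) (hub : k' ≤ 2 ^ m) (hlb : 2 ^ m < 2 * k')
    (ι : Type) [Fintype ι] (kZ : ι → ℕ)
    (hkZ1 : ∀ x, 1 ≤ kZ x) (hkZ2 : ∀ x, kZ x ≤ k')
    (hclass : ∀ i ∈ Finset.Icc 1 (m + 1),
      Nat.card {x : ι // ((2 : ℝ) ^ m) / 2 ^ i < (kZ x : ℝ) ∧
        (kZ x : ℝ) ≤ ((2 : ℝ) ^ m) / 2 ^ (i - 1)} ≤ 2 ^ (3 * i + 3))
    (g : ι → ℕ) (hg : ∀ x, (g x : ℝ) ≤ F (kZ x))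
    (N : ℕ) (hN : 128 * F k' < (N : ℝ)) :
    (∑ x : ι, (g x : ℝ)) < (N : ℝ) := by
  classical
  obtain ⟨hF1, hF2, hF3⟩ := hF
  set C : ℝ := 2 ^ 16 * (r : ℝ) ^ 3 * Real.logb 2 r with hCdef
  have hr2 : (2 : ℝ) ≤ (r : ℝ) := by exact_mod_cast hr
  have hlog : 1 ≤ Real.logb 2 r := by
    rw [show (1:ℝ) = Real.logb 2 2 by simp]
    exact (Real.logb_le_logb one_lt_two (by norm_num) (by linarith)).mpr hr2
  have hC : (2 : ℝ) ^ 19 ≤ C := by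
    have : (2 : ℝ) ^ 19 = 2 ^ 16 * (2 : ℝ) ^ 3 * 1 := by norm_num
    rw [this, hCdef]
    gcongr
  have hC1 : (1 : ℝ) ≤ C := le_trans (by norm_num) hC
  have hC0 : (0 : ℝ) < C := lt_of_lt_of_le one_pos hC1
  -- m ≥ 3
  have hm3 : 3 ≤ m := by
    by_contra h
    push_neg at h
    interval_cases m <;> omega
  have h2m8 : 8 ≤ 2 ^ m := by
    calc (8 : ℕ) = 2 ^ 3 := by norm_num
    _ ≤ 2 ^ m := Nat.pow_le_pow_right (by norm_num) hm3
  have hk'5 : 4 < k' := by omega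
  -- F on powers of two
  have hFpow : ∀ j : ℕ, F (2 ^ j) = C ^ (j - 2) := by
    intro j
    induction j with
    | zero => simpa using hF1 1 (by norm_num)
    | succ j ih =>
      rcases le_or_gt (j + 1) 2 with h | h
      · rw [hF1 _ (by calc 2 ^ (j+1) ≤ 2 ^ 2 := Nat.pow_le_pow_right (by norm_num) h
            _ = 4 := by norm_num)]
        rw [show j + 1 - 2 = 0 by omega, pow_zero]
      · have h4 : 4 < 2 ^ (j + 1) := by
          calc (4 : ℕ) < 2 ^ 3 := by norm_num
          _ ≤ 2 ^ (j + 1) := Nat.pow_le_pow_right (by norm_num) (by omega)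
        rw [hF2 (j + 1) h4]
        have hdiv : 2 ^ (j + 1) / 2 = 2 ^ j := by
          rw [pow_succ]
          exact Nat.mul_div_cancel _ (by norm_num)
        rw [hdiv, ih, show j + 1 - 2 = (j - 2) + 1 by omega, pow_succ]
        ring
  have hFpow1 : ∀ j : ℕ, (1 : ℝ) ≤ F (2 ^ j) := by
    intro j
    rw [hFpow j]
    exact one_le_pow₀ hC1
  -- F n ≤ F (2 ^ clog 2 n)
  have hFle : ∀ n : ℕ, F n ≤ F (2 ^ Nat.clog 2 n) := by
    intro n
    rcases le_or_gt n 4 with h | h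
    · rw [hF1 n h]; exact hFpow1 _
    · by_cases hp : ∃ j, n = 2 ^ j
      · obtain ⟨j, rfl⟩ := hp
        rw [Nat.clog_pow 2 j (by norm_num)]
      · push_neg at hp
        rw [hF3 n h hp]
  -- F k' = C ^ (m - 2)
  have hFk' : F k' = C ^ (m - 2) := by
    have hclogk' : Nat.clog 2 k' = m := by
      have h1 : k' ≤ 2 ^ Nat.clog 2 k' := Nat.le_pow_clog (by norm_num) k'
      have h2 : 2 ^ (Nat.clog 2 k' - 1) < k' :=
        Nat.pow_pred_clog_lt_self (by norm_num) (by omega)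
      set c := Nat.clog 2 k' with hc
      -- c ≤ m : from 2^(c-1) < k' ≤ 2^m
      have hcm : c - 1 < m := by
        have : 2 ^ (c - 1) < 2 ^ m := lt_of_lt_of_le h2 hub
        exact (Nat.pow_lt_pow_iff_right (by norm_num)).mp this
      have hc1 : 1 ≤ c := by
        by_contra hh
        push_neg at hh
        interval_cases c <;> omega
      -- m ≤ c : 2^m < 2*k' ≤ 2*2^c = 2^(c+1)
      have hmc : m < c + 1 := by
        have : 2 ^ m < 2 ^ (c + 1) := by
          calc 2 ^ m < 2 * k' := hlb
          _ ≤ 2 * 2 ^ c := by omega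
          _ = 2 ^ (c + 1) := by ring
        exact (Nat.pow_lt_pow_iff_right (by norm_num)).mp this
      omega
    by_cases hp : ∃ j, k' = 2 ^ j
    · obtain ⟨j, rfl⟩ := hp
      rw [Nat.clog_pow 2 j (by norm_num)] at hclogk'
      rw [hclogk', hFpow]
    · push_neg at hp
      rw [hF3 k' hk'5 hp, hclogk', hFpow]
  -- the class of a cluster
  set cls : ι → ℕ := fun x => m + 1 - Nat.clog 2 (kZ x) with hcls
  have hclog_le : ∀ x, Nat.clog 2 (kZ x) ≤ m := by
    intro x
    have := Nat.clog_mono_right 2 (le_trans (hkZ2 x) hub)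
    rwa [Nat.clog_pow 2 m (by norm_num)] at this
  have hcls_mem : ∀ x : ι, cls x ∈ Finset.Icc 1 (m + 1) := by
    intro x
    simp only [Finset.mem_Icc, hcls]
    have := hclog_le x
    omega
  -- key sum bound
  have key : ∑ x : ι, (g x : ℝ) ≤
      ∑ i ∈ Finset.Icc 1 (m + 1), (2 : ℝ) ^ (3 * i + 3) * C ^ (m - 1 - i) := by
    rw [← Finset.sum_fiberwise_of_maps_to (fun x _ => hcls_mem x) (fun x => (g x : ℝ))]
    apply Finset.sum_le_sum
    intro i hi
    simp only [Finset.mem_Icc] at hi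
    have step1 : ∑ x ∈ Finset.univ.filter (fun x => cls x = i), (g x : ℝ) ≤
        ∑ _x ∈ Finset.univ.filter (fun x => cls x = i), C ^ (m - 1 - i) := by
      apply Finset.sum_le_sum
      intro x hx
      simp only [Finset.mem_filter] at hx
      have hcx : Nat.clog 2 (kZ x) = m + 1 - i := by
        have := hclog_le x
        have := hx.2
        simp only [hcls] at this
        omega
      calc (g x : ℝ) ≤ F (kZ x) := hg x
      _ ≤ F (2 ^ Nat.clog 2 (kZ x)) := hFle _
      _ = C ^ (Nat.clog 2 (kZ x) - 2) := hFpow _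
      _ = C ^ (m - 1 - i) := by rw [hcx, show m + 1 - i - 2 = m - 1 - i by omega]
    rw [Finset.sum_const, nsmul_eq_mul] at step1
    refine le_trans step1 ?_
    have hcard : (Finset.univ.filter (fun x => cls x = i)).card ≤ 2 ^ (3 * i + 3) := by
      refine le_trans ?_ (hclass i (by simp [Finset.mem_Icc]; omega))
      rw [Nat.card_eq_fintype_card, Fintype.card_subtype]
      apply Finset.card_le_card
      intro x hx
      simp only [Finset.mem_filter] at hx ⊢
      refine ⟨Finset.mem_univ x, ?_, ?_⟩
      · -- 2^m / 2^i < kZ x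
        have hcx : Nat.clog 2 (kZ x) = m + 1 - i := by
          have := hclog_le x
          have := hx.2
          simp only [hcls] at this
          omega
        rw [div_lt_iff₀ (by positivity)]
        have hnat : 2 ^ m < kZ x * 2 ^ i := by
          rcases Nat.lt_or_ge (kZ x) 2 with h1 | h2
          · -- kZ x = 1, clog = 0, i = m + 1
            have hk1 : kZ x = 1 := by have := hkZ1 x; omega
            have : Nat.clog 2 (kZ x) = 0 := by rw [hk1]; simp
            have hi' : i = m + 1 := by omega
            rw [hk1, hi', one_mul]
            exact Nat.pow_lt_pow_right (by norm_num) (Nat.lt_succ_self m)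
          · have hlt : 2 ^ (Nat.clog 2 (kZ x) - 1) < kZ x :=
              Nat.pow_pred_clog_lt_self (by norm_num) h2
            have hc1 : 1 ≤ Nat.clog 2 (kZ x) := Nat.clog_pos (by norm_num) h2
            rw [hcx] at hlt
            calc 2 ^ m = 2 ^ (m + 1 - i - 1) * 2 ^ i := by
                  rw [← pow_add]
                  congr 1
                  omega
            _ < kZ x * 2 ^ i := by
                have h2ipos : 0 < 2 ^ i := Nat.pow_pos (by norm_num)
                exact (Nat.mul_lt_mul_right h2ipos).mpr hlt
        calc (2 : ℝ) ^ m = ((2 ^ m : ℕ) : ℝ) := by push_cast; ring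
        _ < ((kZ x * 2 ^ i : ℕ) : ℝ) := by exact_mod_cast hnat
        _ = (kZ x : ℝ) * 2 ^ i := by push_cast; ring
      · -- kZ x ≤ 2^m / 2^(i-1)
        have hcx : Nat.clog 2 (kZ x) = m + 1 - i := by
          have := hclog_le x
          have := hx.2
          simp only [hcls] at this
          omega
        rw [le_div_iff₀ (by positivity)]
        have hle : kZ x ≤ 2 ^ (m + 1 - i) := by
          rw [← hcx]
          exact Nat.le_pow_clog (by norm_num) _
        have hnat : kZ x * 2 ^ (i - 1) ≤ 2 ^ m := by
          calc kZ x * 2 ^ (i - 1) ≤ 2 ^ (m + 1 - i) * 2 ^ (i - 1) :=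
                Nat.mul_le_mul_right _ hle
          _ = 2 ^ (m + 1 - i + (i - 1)) := by rw [← pow_add]
          _ ≤ 2 ^ m := Nat.pow_le_pow_right (by norm_num) (by omega)
        calc (kZ x : ℝ) * 2 ^ (i - 1) = ((kZ x * 2 ^ (i - 1) : ℕ) : ℝ) := by
              push_cast; ring
        _ ≤ ((2 ^ m : ℕ) : ℝ) := by exact_mod_cast hnat
        _ = (2 : ℝ) ^ m := by push_cast; ring
    calc ((Finset.univ.filter (fun x => cls x = i)).card : ℝ) * C ^ (m - 1 - i) ≤
        ((2 ^ (3 * i + 3) : ℕ) : ℝ) * C ^ (m - 1 - i) := by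
          apply mul_le_mul_of_nonneg_right _ (by positivity)
          exact_mod_cast hcard
    _ = (2 : ℝ) ^ (3 * i + 3) * C ^ (m - 1 - i) := by push_cast; ring
  -- termwise bound
  have term : ∀ i ∈ Finset.Icc 1 (m + 1),
      (2 : ℝ) ^ (3 * i + 3) * C ^ (m - 1 - i) ≤ ((1 : ℝ) / 2) ^ i * (2 ^ 7 * C ^ (m - 2)) := by
    intro i hi
    simp only [Finset.mem_Icc] at hi
    have hmain : (2 : ℝ) ^ (4 * i + 3) * C ^ (m - 1 - i) ≤ 2 ^ 7 * C ^ (m - 2) := by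
      rcases Nat.lt_or_ge i m with hlt | hge
      · -- i ≤ m - 1
        have hsplit : C ^ (m - 2) = C ^ (i - 1) * C ^ (m - 1 - i) := by
          rw [← pow_add]
          congr 1
          omega
        rw [hsplit]
        have h16 : (2 : ℝ) ^ 4 ≤ C := le_trans (by norm_num) hC
        have h1 : (2 : ℝ) ^ (4 * i + 3) ≤ 2 ^ 7 * C ^ (i - 1) := by
          calc (2 : ℝ) ^ (4 * i + 3) = 2 ^ 7 * ((2 : ℝ) ^ 4) ^ (i - 1) := by
                rw [← pow_mul, ← pow_add]
                congr 1
                omega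
          _ ≤ 2 ^ 7 * C ^ (i - 1) := by gcongr
        calc (2 : ℝ) ^ (4 * i + 3) * C ^ (m - 1 - i) ≤
            (2 ^ 7 * C ^ (i - 1)) * C ^ (m - 1 - i) :=
              mul_le_mul_of_nonneg_right h1 (by positivity)
        _ = 2 ^ 7 * (C ^ (i - 1) * C ^ (m - 1 - i)) := by ring
      · -- i = m or i = m + 1
        have h0 : m - 1 - i = 0 := by omega
        rw [h0, pow_zero, mul_one]
        calc (2 : ℝ) ^ (4 * i + 3) ≤ (2 : ℝ) ^ (7 + 19 * (m - 2)) := by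
              apply pow_le_pow_right₀ (by norm_num)
              omega
        _ = 2 ^ 7 * ((2 : ℝ) ^ 19) ^ (m - 2) := by rw [← pow_mul, ← pow_add]
        _ ≤ 2 ^ 7 * C ^ (m - 2) := by gcongr
    have h2i : (0 : ℝ) < (2 : ℝ) ^ i := by positivity
    rw [div_pow, one_pow, div_mul_eq_mul_div, le_div_iff₀ h2i]
    calc (2 : ℝ) ^ (3 * i + 3) * C ^ (m - 1 - i) * 2 ^ i =
        (2 : ℝ) ^ (4 * i + 3) * C ^ (m - 1 - i) := by
          rw [mul_right_comm, ← pow_add]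
          congr 2
          omega
    _ ≤ 2 ^ 7 * C ^ (m - 2) := hmain
    _ = 1 * (2 ^ 7 * C ^ (m - 2)) := by ring
  -- geometric sum
  have geo : ∀ n : ℕ, ∑ i ∈ Finset.Icc 1 n, ((1 : ℝ) / 2) ^ i ≤ 1 - (1 / 2) ^ n := by
    intro n
    induction n with
    | zero => simp
    | succ n ih =>
      rw [Finset.sum_Icc_succ_top (by omega)]
      have : ((1 : ℝ) / 2) ^ (n + 1) = (1 / 2) ^ n / 2 := by rw [pow_succ]; ring
      rw [this]
      have h0 : (0 : ℝ) ≤ (1 / 2 : ℝ) ^ n := by positivity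
      linarith
  -- put it together
  have hpos : (0 : ℝ) < 2 ^ 7 * C ^ (m - 2) := by positivity
  calc ∑ x : ι, (g x : ℝ) ≤
      ∑ i ∈ Finset.Icc 1 (m + 1), (2 : ℝ) ^ (3 * i + 3) * C ^ (m - 1 - i) := key
  _ ≤ ∑ i ∈ Finset.Icc 1 (m + 1), ((1 : ℝ) / 2) ^ i * (2 ^ 7 * C ^ (m - 2)) :=
      Finset.sum_le_sum term
  _ = (∑ i ∈ Finset.Icc 1 (m + 1), ((1 : ℝ) / 2) ^ i) * (2 ^ 7 * C ^ (m - 2)) := by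
      rw [Finset.sum_mul]
  _ ≤ (1 - (1 / 2) ^ (m + 1)) * (2 ^ 7 * C ^ (m - 2)) := by
      gcongr
      exact geo (m + 1)
  _ < 1 * (2 ^ 7 * C ^ (m - 2)) := by
      apply mul_lt_mul_of_pos_right _ hpos
      have : (0 : ℝ) < (1 / 2 : ℝ) ^ (m + 1) := by positivity
      linarith
  _ = 128 * F k' := by rw [hFk']; norm_num
  _ < (N : ℝ) := hN

end VS
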